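/- Let a > 0, b > 0, p ≤ −1, let h : (0,∞) → ℝ be bounded and continuous, m_h = ∫₀^∞ h(t) g_{p,a,b}(t) dt, and let f_h(x) = (1/(x² g_{p,a,b}(x))) ∫₀ˣ g_{p,a,b}(t)(h(t) − m_h) dt. Then f_h is the unique bounded differentiable solution on (0,∞) of the GIG Stein equation x² f′(x) + (b/2 + (p+1)x − (a/2)x²) f(x) = h(x) − m_h, and sup_{x>0} |f_h(x)| ≤ M · sup_{x>0} |h(x) − m_h|, where α = (p + 1 + √((p+1)² + a b))/a and M = max( (1/(α² g_{p,a,b}(α))) ∫₀^α g_{p,a,b}(t) dt , (1/(α² g_{p,a,b}(α))) ∫_α^∞ g_{p,a,b}(t) dt ). -/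

import Mathlib

open MeasureTheory Set Filter Real
open scoped ENNReal

/-- The generalized inverse Gaussian density with parameters `p ∈ ℝ`, `a > 0`, `b > 0`
(normalized by its total mass). -/
noncomputable def gigDensity (p a b : ℝ) (x : ℝ) : ℝ :=
  (∫ t in Set.Ioi (0 : ℝ), t ^ (p - 1) * Real.exp (-(a * t + b / t) / 2))⁻¹ *
    (x ^ (p - 1) * Real.exp (-(a * x + b / x) / 2))

noncomputable def gigKer (p a b x : ℝ) : ℝ :=
  x ^ (p - 1) * Real.exp (-(a * x + b / x) / 2)

lemma gigKer_pos (p a b : ℝ) {x : ℝ} (hx : 0 < x) : 0 < gigKer p a b x :=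
  mul_pos (Real.rpow_pos_of_pos hx _) (Real.exp_pos _)

lemma continuousOn_gigKer (p a b : ℝ) : ContinuousOn (gigKer p a b) (Ioi 0) := by
  apply ContinuousOn.mul
  · exact fun x hx => (Real.continuousAt_rpow_const x _ (Or.inl (ne_of_gt hx))).continuousWithinAt
  · apply Real.continuous_exp.comp_continuousOn
    apply ContinuousOn.div_const
    apply ContinuousOn.neg
    exact (continuous_const.mul continuous_id).continuousOn.add
      (continuousOn_const.div continuousOn_id (fun x hx => ne_of_gt hx))

-- pow bound: exp x ≥ x^n / n!
lemma auxPowExp (x : ℝ) (hx : 0 ≤ x) (n : ℕ) :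
    x ^ n / n.factorial ≤ Real.exp x := by
  calc x ^ n / n.factorial = ∑ i ∈ Finset.range 1, x ^ (n) / (n).factorial := by simp
  _ ≤ Real.exp x := by
    have := Real.sum_le_exp_of_nonneg hx (n+1)
    refine le_trans ?_ this
    simp only [Finset.range_one, Finset.sum_singleton]
    exact Finset.single_le_sum (f := fun i => x ^ i / i.factorial)
      (fun i _ => by positivity) (Finset.self_mem_range_succ n)

lemma auxExpNegLe {y : ℝ} (hy : 0 < y) (n : ℕ) :
    Real.exp (-y) ≤ (n.factorial : ℝ) / y ^ n := by
  rw [le_div_iff₀ (by positivity)]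
  have h := auxPowExp y hy.le n
  rw [div_le_iff₀ (by positivity)] at h
  calc Real.exp (-y) * y ^ n ≤ Real.exp (-y) * (Real.exp y * n.factorial) :=
        mul_le_mul_of_nonneg_left h (Real.exp_pos _).le
    _ = Real.exp (-y) * Real.exp y * n.factorial := by ring
    _ = n.factorial := by rw [← Real.exp_add]; simp

lemma integrableOn_gigKer (p : ℝ) {a b : ℝ} (ha : 0 < a) (hb : 0 < b) :
    IntegrableOn (gigKer p a b) (Ioi 0) := by
  have hmeasG : Measurable (gigKer p a b) := by
    unfold gigKer
    fun_prop
  rw [show Ioi (0:ℝ) = Ioc 0 1 ∪ Ioi 1 by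
    rw [Ioc_union_Ioi_eq_Ioi]; norm_num, integrableOn_union]
  constructor
  · -- near 0 : bound by constant
    obtain ⟨n, hn⟩ := exists_nat_ge (1 - p)
    refine Measure.integrableOn_of_bounded (by simp) hmeasG.aestronglyMeasurable
      (M := n.factorial * (2 / b) ^ n) ?_
    filter_upwards [ae_restrict_mem measurableSet_Ioc] with x hx
    obtain ⟨hx0, hx1⟩ := hx
    have hker : gigKer p a b x ≤ n.factorial * (2 / b) ^ n := by
      have h1 : Real.exp (-(a * x + b / x) / 2) ≤ Real.exp (-(b / x / 2)) := by
        apply Real.exp_le_exp.2; rw [neg_div]; apply neg_le_neg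
        rw [div_le_div_iff_of_pos_right (by norm_num)]
        nlinarith [mul_pos ha hx0]
      have h2 : Real.exp (-(b / x / 2)) ≤ n.factorial * (2 * x / b) ^ n := by
        rw [Real.exp_neg]
        rw [inv_le_comm₀ (Real.exp_pos _) (by positivity)]
        rw [inv_le_iff_one_le_mul₀ (by positivity)]
        have := auxPowExp (b / x / 2) (by positivity) n
        have hbx : (2 * x / b) ^ n * (b / x / 2) ^ n = 1 := by
          rw [← mul_pow]
          rw [show 2 * x / b * (b / x / 2) = 1 by field_simp]
          simp
        calc (1:ℝ) = (2 * x / b) ^ n * (b / x / 2) ^ n := hbx.symm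
          _ ≤ (2*x/b) ^ n * ((n.factorial : ℝ) * Real.exp (b / x / 2)) := by
              apply mul_le_mul_of_nonneg_left _ (by positivity)
              rw [div_le_iff₀ (by positivity)] at this
              linarith [this]
          _ = Real.exp (b / x / 2) * (↑n.factorial * (2 * x / b) ^ n) := by ring
      have h3 : x ^ (p - 1) * ((n.factorial : ℝ) * (2 * x / b) ^ n)
          ≤ n.factorial * (2 / b) ^ n := by
        have : x ^ (p-1) * ((n.factorial : ℝ) * (2*x/b)^n)
            = (n.factorial : ℝ) * (2/b)^n * (x ^ (p-1) * x ^ (n:ℕ)) := by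
          rw [show 2*x/b = 2/b*x by ring, mul_pow]; ring
        rw [this]
        have hxpow : x ^ (p-1) * x ^ (n:ℕ) ≤ 1 := by
          rw [← Real.rpow_natCast x n, ← Real.rpow_add hx0]
          apply Real.rpow_le_one hx0.le hx1
          linarith
        have hc : (0:ℝ) ≤ (n.factorial:ℝ) * (2/b)^n := by positivity
        nlinarith [mul_le_mul_of_nonneg_left hxpow hc]
      calc gigKer p a b x ≤ x ^ (p-1) * Real.exp (-(b / x / 2)) :=
            mul_le_mul_of_nonneg_left h1 (Real.rpow_nonneg hx0.le _)
        _ ≤ x ^ (p-1) * ((n.factorial : ℝ) * (2 * x / b) ^ n) :=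
            mul_le_mul_of_nonneg_left h2 (Real.rpow_nonneg hx0.le _)
        _ ≤ _ := h3
    rw [Real.norm_eq_abs, abs_of_nonneg (le_of_lt (gigKer_pos p a b hx0))]
    exact hker
  · -- on Ioi 1 : bound by C * exp(-a/4 x)
    obtain ⟨n, hn⟩ := exists_nat_ge (p - 1)
    refine Integrable.mono' ((exp_neg_integrableOn_Ioi 1 (show (0:ℝ) < a/4 by linarith)).const_mul
      ((n.factorial : ℝ) * (4 / a) ^ n))
      hmeasG.aestronglyMeasurable ?_
    filter_upwards [ae_restrict_mem measurableSet_Ioi] with x hx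
    have hx1 : (1:ℝ) < x := hx
    have hx0 : (0:ℝ) < x := lt_trans one_pos hx1
    rw [Real.norm_eq_abs, abs_of_nonneg (le_of_lt (gigKer_pos p a b hx0))]
    have h1 : Real.exp (-(a * x + b / x) / 2) ≤ Real.exp (-(a*x/2)) := by
      apply Real.exp_le_exp.2
      have hbx : 0 ≤ b / x := (div_pos hb hx0).le
      rw [neg_div]
      have : a*x/2 ≤ (a*x + b/x)/2 := by linarith
      linarith
    have h3 : Real.exp (-(a*x/4)) ≤ (n.factorial : ℝ) / (a*x/4) ^ n :=
      auxExpNegLe (by positivity) n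
    have key : x ^ (p-1) * Real.exp (-(a*x/4)) ≤ (n.factorial : ℝ) * (4/a) ^ n := by
      have h4 : x ^ (p-1) * ((n.factorial : ℝ) / (a*x/4)^n)
          = (n.factorial : ℝ) * (4/a)^n * (x ^ (p-1) * (x ^ (n:ℕ))⁻¹) := by
        rw [show a*x/4 = a/4*x by ring, mul_pow]
        have hxn : (x:ℝ) ^ (n:ℕ) ≠ 0 := by positivity
        have han : ((a/4:ℝ)) ^ (n:ℕ) ≠ 0 := by positivity
        field_simp
        ring_nf
        rw [inv_pow, mul_inv_cancel₀ (pow_ne_zero _ ha.ne'), one_mul, ← mul_pow]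
        norm_num
      have h5 : x ^ (p-1) * (x ^ (n:ℕ))⁻¹ ≤ 1 := by
        rw [← Real.rpow_natCast x n, ← Real.rpow_neg hx0.le, ← Real.rpow_add hx0]
        exact Real.rpow_le_one_of_one_le_of_nonpos hx1.le (by linarith)
      calc x ^ (p-1) * Real.exp (-(a*x/4)) ≤ x ^ (p-1) * ((n.factorial:ℝ)/(a*x/4)^n) :=
            mul_le_mul_of_nonneg_left h3 (Real.rpow_nonneg hx0.le _)
        _ = (n.factorial : ℝ) * (4/a)^n * (x ^ (p-1) * (x ^ (n:ℕ))⁻¹) := h4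
        _ ≤ (n.factorial : ℝ) * (4/a)^n := by
            have hc : (0:ℝ) ≤ (n.factorial:ℝ) * (4/a)^n := by positivity
            nlinarith [mul_le_mul_of_nonneg_left h5 hc]
    calc gigKer p a b x ≤ x ^ (p-1) * Real.exp (-(a*x/2)) :=
          mul_le_mul_of_nonneg_left h1 (Real.rpow_nonneg hx0.le _)
      _ = x ^ (p-1) * (Real.exp (-(a*x/4)) * Real.exp (-(a/4)*x)) := by
          rw [← Real.exp_add]; congr 1; ring
      _ = (x ^ (p-1) * Real.exp (-(a*x/4))) * Real.exp (-(a/4)*x) := by ring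
      _ ≤ (n.factorial : ℝ) * (4/a)^n * Real.exp (-(a/4)*x) :=
          mul_le_mul_of_nonneg_right key (Real.exp_pos _).le

lemma gigKer_shift (p a b : ℝ) {x : ℝ} (hx : 0 < x) :
    gigKer (p+2) a b x = x ^ 2 * gigKer p a b x := by
  unfold gigKer
  rw [show p + 2 - 1 = p - 1 + 2 by ring, Real.rpow_add hx,
    show (2:ℝ) = ((2:ℕ):ℝ) by norm_num, Real.rpow_natCast]
  ring

lemma hasDerivAt_gigKer (p a b : ℝ) {x : ℝ} (hx : 0 < x) :
    HasDerivAt (gigKer p a b) (((p-1)/x - (a - b/x^2)/2) * gigKer p a b x) x := by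
  have h1 : HasDerivAt (fun y : ℝ => y ^ (p-1)) ((p-1) * x ^ (p-1-1)) x :=
    Real.hasDerivAt_rpow_const (Or.inl hx.ne')
  have hφ : HasDerivAt (fun y : ℝ => -(a*y + b/y)/2) (-(a - b/x^2)/2) x := by
    have hbb : HasDerivAt (fun y : ℝ => b/y) (-(b/x^2)) x := by
      simpa [div_eq_mul_inv, mul_neg] using (hasDerivAt_inv hx.ne').const_mul b
    have haa : HasDerivAt (fun y : ℝ => a*y) a x := by
      simpa using (hasDerivAt_id x).const_mul a
    exact ((haa.add hbb).neg).div_const 2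
  have hexp : HasDerivAt (fun y : ℝ => Real.exp (-(a*y + b/y)/2))
      (Real.exp (-(a*x + b/x)/2) * (-(a - b/x^2)/2)) x := hφ.exp
  have := h1.mul hexp
  refine this.congr_deriv ?_
  unfold gigKer
  have e1 : x ^ (p-1-1) = x ^ (p-1) / x := by
    rw [Real.rpow_sub hx, Real.rpow_one]
  rw [e1]
  ring

lemma Zpos (p : ℝ) {a b : ℝ} (ha : 0 < a) (hb : 0 < b) :
    0 < ∫ t in Ioi (0:ℝ), gigKer p a b t := by
  have hnn : (0:ℝ → ℝ) ≤ᶠ[ae (volume.restrict (Ioi (0:ℝ)))] gigKer p a b := by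
    filter_upwards [ae_restrict_mem measurableSet_Ioi] with x hx
    exact (gigKer_pos p a b hx).le
  rw [setIntegral_pos_iff_support_of_nonneg_ae hnn (integrableOn_gigKer p ha hb)]
  have hsub : Ioi (0:ℝ) ⊆ Function.support (gigKer p a b) ∩ Ioi 0 :=
    fun x hx => ⟨(gigKer_pos p a b hx).ne', hx⟩
  calc (0:ℝ≥0∞) < volume (Ioi (0:ℝ)) := by simp
    _ ≤ _ := measure_mono hsub

lemma gigDensity_eq (p a b x : ℝ) :
    gigDensity p a b x = (∫ t in Ioi (0:ℝ), gigKer p a b t)⁻¹ * gigKer p a b x := rfl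

lemma gigDensity_pos (p : ℝ) {a b x : ℝ} (ha : 0 < a) (hb : 0 < b) (hx : 0 < x) :
    0 < gigDensity p a b x := by
  rw [gigDensity_eq]
  exact mul_pos (inv_pos.2 (Zpos p ha hb)) (gigKer_pos p a b hx)

lemma continuousOn_gigDensity (p a b : ℝ) : ContinuousOn (gigDensity p a b) (Ioi 0) := by
  have : gigDensity p a b = fun x => (∫ t in Ioi (0:ℝ), gigKer p a b t)⁻¹ * gigKer p a b x :=
    rfl
  rw [this]
  exact continuousOn_const.mul (continuousOn_gigKer p a b)

lemma integrableOn_gigDensity (p : ℝ) {a b : ℝ} (ha : 0 < a) (hb : 0 < b) :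
    IntegrableOn (gigDensity p a b) (Ioi 0) := by
  have : gigDensity p a b = fun x => (∫ t in Ioi (0:ℝ), gigKer p a b t)⁻¹ * gigKer p a b x :=
    rfl
  rw [this]
  exact (integrableOn_gigKer p ha hb).const_mul _

lemma integral_gigDensity (p : ℝ) {a b : ℝ} (ha : 0 < a) (hb : 0 < b) :
    ∫ t in Ioi (0:ℝ), gigDensity p a b t = 1 := by
  have : (∫ t in Ioi (0:ℝ), gigDensity p a b t)
      = (∫ t in Ioi (0:ℝ), gigKer p a b t)⁻¹ * ∫ t in Ioi (0:ℝ), gigKer p a b t := by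
    rw [← integral_const_mul]; rfl
  rw [this, inv_mul_cancel₀ (Zpos p ha hb).ne']

lemma hasDerivAt_gigDensity (p a b : ℝ) {x : ℝ} (hx : 0 < x) :
    HasDerivAt (gigDensity p a b)
      (((p-1)/x - (a - b/x^2)/2) * gigDensity p a b x) x := by
  have h := (hasDerivAt_gigKer p a b hx).const_mul (∫ t in Ioi (0:ℝ), gigKer p a b t)⁻¹
  have : gigDensity p a b = fun y => (∫ t in Ioi (0:ℝ), gigKer p a b t)⁻¹ * gigKer p a b y :=
    rfl
  rw [this]
  refine h.congr_deriv ?_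
  ring

lemma hasDerivAt_u (p a b : ℝ) {x : ℝ} (hx : 0 < x) :
    HasDerivAt (fun y => y^2 * gigDensity p a b y)
      ((b/2 + (p+1)*x - a/2*x^2) * gigDensity p a b x) x := by
  have hx2 : HasDerivAt (fun y : ℝ => y^2) (2*x) x := by
    simpa using hasDerivAt_pow 2 x
  have := hx2.mul (hasDerivAt_gigDensity p a b hx)
  refine this.congr_deriv ?_
  set G := gigDensity p a b x
  field_simp
  ring

lemma tendsto_u_zero (p : ℝ) {a b : ℝ} (ha : 0 < a) (hb : 0 < b) :
    Tendsto (fun x => x^2 * gigDensity p a b x) (nhdsWithin 0 (Ioi 0)) (nhds 0) := by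
  set Z := (∫ t in Ioi (0:ℝ), gigKer p a b t)⁻¹ with hZ
  have hEq : ∀ x ∈ Ioi (0:ℝ), x^2 * gigDensity p a b x
      = Z * ((x⁻¹) ^ (-(p+1)) * Real.exp (-(b/2) * x⁻¹)) * Real.exp (-(a/2) * x) := by
    intro x hx
    have hx0 : 0 < x := hx
    rw [gigDensity_eq]
    unfold gigKer
    have e1 : (x⁻¹) ^ (-(p+1)) = x ^ (p+1) := by
      rw [Real.inv_rpow hx0.le, Real.rpow_neg hx0.le, inv_inv]
    have e2 : Real.exp (-(a*x + b/x)/2) = Real.exp (-(b/2) * x⁻¹) * Real.exp (-(a/2) * x) := by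
      rw [← Real.exp_add]; congr 1; field_simp; ring
    have e3 : (x:ℝ)^(2:ℕ) * x ^ (p-1) = x ^ (p+1) := by
      rw [← Real.rpow_natCast x 2, ← Real.rpow_add hx0]
      congr 1
      push_cast
      ring
    rw [e1, e2]
    calc x^2 * (Z * (x ^ (p-1) * (Real.exp (-(b/2) * x⁻¹) * Real.exp (-(a/2) * x))))
        = Z * ((x^(2:ℕ) * x ^ (p-1)) * Real.exp (-(b/2) * x⁻¹)) * Real.exp (-(a/2) * x) := by
          ring
      _ = _ := by rw [e3]
  have h1 : Tendsto (fun x : ℝ => (x⁻¹) ^ (-(p+1)) * Real.exp (-(b/2) * x⁻¹))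
      (nhdsWithin 0 (Ioi 0)) (nhds 0) := by
    have := (tendsto_rpow_mul_exp_neg_mul_atTop_nhds_zero (-(p+1)) (b/2) (by linarith)).comp
      tendsto_inv_nhdsGT_zero
    exact this
  have h2 : Tendsto (fun x : ℝ => Real.exp (-(a/2) * x)) (nhdsWithin 0 (Ioi 0)) (nhds 1) := by
    have hcont : Continuous (fun x : ℝ => Real.exp (-(a/2) * x)) :=
      Real.continuous_exp.comp (continuous_const.mul continuous_id)
    have : Tendsto (fun x : ℝ => Real.exp (-(a/2) * x)) (nhds 0) (nhds 1) := by
      simpa using hcont.tendsto 0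
    exact this.mono_left nhdsWithin_le_nhds
  have h3 : Tendsto (fun x : ℝ => Z * ((x⁻¹) ^ (-(p+1)) * Real.exp (-(b/2) * x⁻¹))
      * Real.exp (-(a/2) * x)) (nhdsWithin 0 (Ioi 0)) (nhds 0) := by
    have := ((h1.const_mul Z).mul h2)
    simpa using this
  exact h3.congr' (by filter_upwards [self_mem_nhdsWithin] with x hx using (hEq x hx).symm)

lemma tendsto_u_atTop (p : ℝ) {a b : ℝ} (ha : 0 < a) (hb : 0 < b) :
    Tendsto (fun x => x^2 * gigDensity p a b x) atTop (nhds 0) := by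
  set Z := (∫ t in Ioi (0:ℝ), gigKer p a b t)⁻¹ with hZ
  have hEq : ∀ x ∈ Ioi (0:ℝ), x^2 * gigDensity p a b x
      = Z * (x ^ (p+1) * Real.exp (-(a/2) * x)) * Real.exp (-(b/2) * x⁻¹) := by
    intro x hx
    have hx0 : 0 < x := hx
    rw [gigDensity_eq]
    unfold gigKer
    have e2 : Real.exp (-(a*x + b/x)/2) = Real.exp (-(a/2) * x) * Real.exp (-(b/2) * x⁻¹) := by
      rw [← Real.exp_add]; congr 1; field_simp; ring
    have e3 : (x:ℝ)^(2:ℕ) * x ^ (p-1) = x ^ (p+1) := by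
      rw [← Real.rpow_natCast x 2, ← Real.rpow_add hx0]
      congr 1
      push_cast
      ring
    rw [e2]
    calc x^2 * (Z * (x ^ (p-1) * (Real.exp (-(a/2) * x) * Real.exp (-(b/2) * x⁻¹))))
        = Z * ((x^(2:ℕ) * x ^ (p-1)) * Real.exp (-(a/2) * x)) * Real.exp (-(b/2) * x⁻¹) := by
          ring
      _ = _ := by rw [e3]
  have h1 : Tendsto (fun x : ℝ => x ^ (p+1) * Real.exp (-(a/2) * x)) atTop (nhds 0) :=
    tendsto_rpow_mul_exp_neg_mul_atTop_nhds_zero (p+1) (a/2) (by linarith)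
  have h2 : Tendsto (fun x : ℝ => Real.exp (-(b/2) * x⁻¹)) atTop (nhds 1) := by
    have hinv : Tendsto (fun x : ℝ => x⁻¹) atTop (nhds 0) := tendsto_inv_atTop_zero
    have hcont : Continuous (fun y : ℝ => Real.exp (-(b/2) * y)) :=
      Real.continuous_exp.comp (continuous_const.mul continuous_id)
    have h0 : Tendsto (fun y : ℝ => Real.exp (-(b/2) * y)) (nhds 0) (nhds 1) := by
      simpa using hcont.tendsto 0
    exact h0.comp hinv
  have h3 : Tendsto (fun x : ℝ => Z * (x ^ (p+1) * Real.exp (-(a/2) * x))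
      * Real.exp (-(b/2) * x⁻¹)) atTop (nhds 0) := by
    have := ((h1.const_mul Z).mul h2)
    simpa using this
  refine h3.congr' ?_
  filter_upwards [eventually_gt_atTop 0] with x hx using (hEq x hx).symm

lemma intervalIntegrable_of_Ioi {w : ℝ → ℝ} (hw : IntegrableOn w (Ioi 0)) {x : ℝ}
    (hx : 0 < x) : IntervalIntegrable w volume 0 x := by
  rw [intervalIntegrable_iff_integrableOn_Ioc_of_le hx.le]
  exact hw.mono_set Ioc_subset_Ioi_self

lemma hasDerivAt_primitive {w : ℝ → ℝ} (hw_cont : ContinuousOn w (Ioi 0))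
    (hw : IntegrableOn w (Ioi 0)) {x : ℝ} (hx : 0 < x) :
    HasDerivAt (fun y => ∫ t in (0:ℝ)..y, w t) (w x) x := by
  refine intervalIntegral.integral_hasDerivAt_right (intervalIntegrable_of_Ioi hw hx)
    (hw_cont.stronglyMeasurableAtFilter isOpen_Ioi x hx) ?_
  exact hw_cont.continuousAt (Ioi_mem_nhds hx)

lemma primitive_tendsto_zero {w : ℝ → ℝ} (hw : IntegrableOn w (Ioi 0)) :
    Tendsto (fun x => ∫ t in (0:ℝ)..x, w t) (nhdsWithin 0 (Ioi 0)) (nhds 0) := by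
  have hicc : IntegrableOn w (Icc (0:ℝ) 1) := by
    rw [integrableOn_Icc_iff_integrableOn_Ioc]
    exact hw.mono_set Ioc_subset_Ioi_self
  have hc := intervalIntegral.continuousOn_primitive (μ := volume) hicc
  have h0 : ContinuousWithinAt (fun x => ∫ t in Ioc (0:ℝ) x, w t) (Icc 0 1) 0 :=
    hc 0 (by norm_num)
  have h0' : Tendsto (fun x => ∫ t in Ioc (0:ℝ) x, w t) (nhdsWithin 0 (Icc 0 1)) (nhds 0) := by
    have hz : (∫ t in Ioc (0:ℝ) (0:ℝ), w t) = 0 := by simp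
    have := h0.tendsto
    rwa [hz] at this
  have hle : nhdsWithin (0:ℝ) (Ioi 0) ≤ nhdsWithin 0 (Icc 0 1) := by
    rw [← nhdsWithin_Ioc_eq_nhdsGT (show (0:ℝ) < 1 by norm_num)]
    exact nhdsWithin_mono _ Ioc_subset_Icc_self
  refine (h0'.mono_left hle).congr' ?_
  filter_upwards [self_mem_nhdsWithin] with x hx
  rw [intervalIntegral.integral_of_le (le_of_lt hx)]

lemma primitive_tendsto_atTop {w : ℝ → ℝ} (hw : IntegrableOn w (Ioi 0)) :
    Tendsto (fun x => ∫ t in (0:ℝ)..x, w t) atTop (nhds (∫ t in Ioi (0:ℝ), w t)) :=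
  intervalIntegral_tendsto_integral_Ioi 0 hw tendsto_id

lemma const_of_deriv_zero {f : ℝ → ℝ} (hf : ∀ x ∈ Ioi (0:ℝ), HasDerivAt f 0 x) :
    ∀ x ∈ Ioi (0:ℝ), ∀ y ∈ Ioi (0:ℝ), f x = f y := by
  have key : ∀ x y : ℝ, 0 < x → x ≤ y → f y = f x := by
    intro x y hx hxy
    have hcont : ContinuousOn f (Icc x y) := fun z hz =>
      ((hf z (lt_of_lt_of_le hx hz.1)).continuousAt).continuousWithinAt
    have hderiv : ∀ z ∈ Ico x y, HasDerivWithinAt f 0 (Ici z) z := fun z hz =>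
      ((hf z (lt_of_lt_of_le hx hz.1)).hasDerivWithinAt)
    exact constant_of_has_deriv_right_zero hcont hderiv y (right_mem_Icc.2 hxy)
  intro x hx y hy
  rcases le_total x y with hle | hle
  · exact (key x y hx hle).symm
  · exact key y x hy hle

lemma continuousOn_qg (p a b : ℝ) :
    ContinuousOn (fun x => (b/2 + (p+1)*x - a/2*x^2) * gigDensity p a b x) (Ioi 0) := by
  apply ContinuousOn.mul _ (continuousOn_gigDensity p a b)
  fun_prop

lemma integrableOn_qg (p : ℝ) {a b : ℝ} (ha : 0 < a) (hb : 0 < b) :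
    IntegrableOn (fun x => (b/2 + (p+1)*x - a/2*x^2) * gigDensity p a b x) (Ioi 0) := by
  set Z := (∫ t in Ioi (0:ℝ), gigKer p a b t)⁻¹ with hZ
  have hint : IntegrableOn (fun x => Z * (b/2 * gigKer p a b x + (p+1) * gigKer (p+1) a b x
      - a/2 * gigKer (p+2) a b x)) (Ioi 0) :=
    (((((integrableOn_gigKer p ha hb).const_mul (b/2)).add
      ((integrableOn_gigKer (p+1) ha hb).const_mul (p+1))).sub
      ((integrableOn_gigKer (p+2) ha hb).const_mul (a/2))).const_mul Z)
  refine hint.congr_fun (fun x hx => ?_) measurableSet_Ioi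
  have hx0 : (0:ℝ) < x := hx
  have e1 : gigKer (p+1) a b x = x * gigKer p a b x := by
    unfold gigKer
    rw [show p + 1 - 1 = (p-1) + 1 by ring, Real.rpow_add hx0, Real.rpow_one]
    ring
  have e2 := gigKer_shift p a b hx0
  beta_reduce
  rw [gigDensity_eq, e1, e2]
  ring

lemma u_eq_primitive (p : ℝ) {a b : ℝ} (ha : 0 < a) (hb : 0 < b) {x : ℝ} (hx : 0 < x) :
    x^2 * gigDensity p a b x
      = ∫ t in (0:ℝ)..x, (b/2 + (p+1)*t - a/2*t^2) * gigDensity p a b t := by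
  set w := fun t => (b/2 + (p+1)*t - a/2*t^2) * gigDensity p a b t with hw
  have hw_cont : ContinuousOn w (Ioi 0) := continuousOn_qg p a b
  have hw_int : IntegrableOn w (Ioi 0) := integrableOn_qg p ha hb
  set D := fun y => y^2 * gigDensity p a b y - ∫ t in (0:ℝ)..y, w t with hD'
  have hD : ∀ y ∈ Ioi (0:ℝ), HasDerivAt D 0 y := by
    intro y hy
    have h1 := hasDerivAt_u p a b (show (0:ℝ) < y from hy)
    have h2 := hasDerivAt_primitive hw_cont hw_int (show (0:ℝ) < y from hy)
    have := h1.sub h2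
    simp only [hw, sub_self] at this
    exact this
  have hconst := const_of_deriv_zero hD
  have hten : Tendsto D (nhdsWithin 0 (Ioi 0)) (nhds 0) := by
    have := (tendsto_u_zero p ha hb).sub (primitive_tendsto_zero hw_int)
    simpa using this
  have hzero : D x = 0 := by
    have hev : ∀ᶠ y in nhdsWithin (0:ℝ) (Ioi 0), D y = D x := by
      filter_upwards [self_mem_nhdsWithin] with y hy using hconst y hy x hx
    exact tendsto_nhds_unique tendsto_const_nhds (hten.congr' hev)
  have := hzero
  simp only [hD'] at this
  linarith

lemma integral_qg_zero (p : ℝ) {a b : ℝ} (ha : 0 < a) (hb : 0 < b) :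
    ∫ t in Ioi (0:ℝ), (b/2 + (p+1)*t - a/2*t^2) * gigDensity p a b t = 0 := by
  set w := fun t => (b/2 + (p+1)*t - a/2*t^2) * gigDensity p a b t with hw
  have hw_int : IntegrableOn w (Ioi 0) := integrableOn_qg p ha hb
  set D := fun y => y^2 * gigDensity p a b y - ∫ t in (0:ℝ)..y, w t with hD'
  have hDzero : ∀ y ∈ Ioi (0:ℝ), D y = 0 := by
    intro y hy
    simp only [hD']
    have := u_eq_primitive p ha hb (show (0:ℝ) < y from hy)
    linarith
  have hten : Tendsto D atTop (nhds (0 - ∫ t in Ioi (0:ℝ), w t)) :=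
    (tendsto_u_atTop p ha hb).sub (primitive_tendsto_atTop hw_int)
  have hten0 : Tendsto D atTop (nhds 0) := by
    refine Tendsto.congr' ?_ tendsto_const_nhds
    filter_upwards [eventually_gt_atTop 0] with y hy using (hDzero y hy).symm
  have := tendsto_nhds_unique hten hten0
  linarith

lemma integral_split {w : ℝ → ℝ} (hw : IntegrableOn w (Ioi 0)) {x : ℝ} (hx : 0 < x) :
    (∫ t in Ioi (0:ℝ), w t) = (∫ t in (0:ℝ)..x, w t) + ∫ t in Ioi x, w t := by
  rw [intervalIntegral.integral_of_le hx.le]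
  rw [← setIntegral_union (Ioc_disjoint_Ioi le_rfl) measurableSet_Ioi
    (hw.mono_set Ioc_subset_Ioi_self) (hw.mono_set (Ioi_subset_Ioi hx.le)),
    Ioc_union_Ioi_eq_Ioi hx.le]

lemma u_eq_tail (p : ℝ) {a b : ℝ} (ha : 0 < a) (hb : 0 < b) {x : ℝ} (hx : 0 < x) :
    x^2 * gigDensity p a b x
      = - ∫ t in Ioi x, (b/2 + (p+1)*t - a/2*t^2) * gigDensity p a b t := by
  have h1 := integral_split (integrableOn_qg p ha hb) hx
  rw [integral_qg_zero p ha hb] at h1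
  rw [u_eq_primitive p ha hb hx]
  linarith

lemma alpha_pos {p a b : ℝ} (ha : 0 < a) (hb : 0 < b) :
    0 < (p + 1 + Real.sqrt ((p + 1) ^ 2 + a * b)) / a := by
  apply div_pos _ ha
  have h1 : Real.sqrt ((p+1)^2) < Real.sqrt ((p+1)^2 + a*b) :=
    Real.sqrt_lt_sqrt (by positivity) (by nlinarith)
  rw [Real.sqrt_sq_eq_abs] at h1
  have h2 := neg_abs_le (p+1)
  linarith

-- q t ≥ q x for 0 < t ≤ x  (q decreasing since p ≤ -1)
lemma q_anti {p a : ℝ} (hp : p ≤ -1) (ha : 0 < a) {b t x : ℝ} (ht : 0 < t) (htx : t ≤ x) :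
    b/2 + (p+1)*x - a/2*x^2 ≤ b/2 + (p+1)*t - a/2*t^2 := by
  have h1 : 0 ≤ x - t := by linarith
  have h2 : (p+1) - a/2*(x+t) ≤ 0 := by nlinarith
  have h3 : (x-t) * ((p+1) - a/2*(x+t)) ≤ 0 := mul_nonpos_of_nonneg_of_nonpos h1 h2
  nlinarith [h3]

lemma key_ineq_left (p : ℝ) {a b : ℝ} (ha : 0 < a) (hb : 0 < b) (hp : p ≤ -1)
    {x : ℝ} (hx : 0 < x) :
    (b/2 + (p+1)*x - a/2*x^2) * (∫ t in (0:ℝ)..x, gigDensity p a b t)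
      ≤ x^2 * gigDensity p a b x := by
  rw [u_eq_primitive p ha hb hx]
  rw [intervalIntegral.integral_of_le hx.le, intervalIntegral.integral_of_le hx.le]
  have hgi : IntegrableOn (gigDensity p a b) (Ioc 0 x) :=
    (integrableOn_gigDensity p ha hb).mono_set Ioc_subset_Ioi_self
  have hqgi : IntegrableOn (fun t => (b/2 + (p+1)*t - a/2*t^2) * gigDensity p a b t)
      (Ioc 0 x) := (integrableOn_qg p ha hb).mono_set Ioc_subset_Ioi_self
  have hdiff : 0 ≤ ∫ t in Ioc (0:ℝ) x,
      ((b/2 + (p+1)*t - a/2*t^2) - (b/2 + (p+1)*x - a/2*x^2)) * gigDensity p a b t := by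
    apply setIntegral_nonneg measurableSet_Ioc
    intro t ht
    apply mul_nonneg _ (gigDensity_pos p ha hb ht.1).le
    have := q_anti hp ha (b := b) ht.1 ht.2
    linarith
  have hsplit : (∫ t in Ioc (0:ℝ) x,
        ((b/2 + (p+1)*t - a/2*t^2) - (b/2 + (p+1)*x - a/2*x^2)) * gigDensity p a b t)
      = (∫ t in Ioc (0:ℝ) x, (b/2 + (p+1)*t - a/2*t^2) * gigDensity p a b t)
        - (b/2 + (p+1)*x - a/2*x^2) * ∫ t in Ioc (0:ℝ) x, gigDensity p a b t := by
    rw [← integral_const_mul, ← integral_sub hqgi (hgi.const_mul _)]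
    congr 1; ext t; ring
  rw [hsplit] at hdiff
  linarith

lemma key_ineq_right (p : ℝ) {a b : ℝ} (ha : 0 < a) (hb : 0 < b) (hp : p ≤ -1)
    {x : ℝ} (hx : 0 < x) :
    -((b/2 + (p+1)*x - a/2*x^2) * (∫ t in Ioi x, gigDensity p a b t))
      ≤ x^2 * gigDensity p a b x := by
  rw [u_eq_tail p ha hb hx]
  have hgi : IntegrableOn (gigDensity p a b) (Ioi x) :=
    (integrableOn_gigDensity p ha hb).mono_set (Ioi_subset_Ioi hx.le)
  have hqgi : IntegrableOn (fun t => (b/2 + (p+1)*t - a/2*t^2) * gigDensity p a b t)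
      (Ioi x) := (integrableOn_qg p ha hb).mono_set (Ioi_subset_Ioi hx.le)
  have hdiff : 0 ≤ ∫ t in Ioi x,
      ((b/2 + (p+1)*x - a/2*x^2) - (b/2 + (p+1)*t - a/2*t^2)) * gigDensity p a b t := by
    apply setIntegral_nonneg measurableSet_Ioi
    intro t ht
    apply mul_nonneg _ (gigDensity_pos p ha hb (lt_trans hx ht)).le
    have := q_anti hp ha (b := b) hx (le_of_lt ht)
    linarith
  have hsplit : (∫ t in Ioi x,
        ((b/2 + (p+1)*x - a/2*x^2) - (b/2 + (p+1)*t - a/2*t^2)) * gigDensity p a b t)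
      = (b/2 + (p+1)*x - a/2*x^2) * (∫ t in Ioi x, gigDensity p a b t)
        - ∫ t in Ioi x, (b/2 + (p+1)*t - a/2*t^2) * gigDensity p a b t := by
    rw [← integral_const_mul, ← integral_sub (hgi.const_mul _) hqgi]
    congr 1; ext t; ring
  rw [hsplit] at hdiff
  linarith

lemma hasDerivAt_tail (p : ℝ) {a b : ℝ} (ha : 0 < a) (hb : 0 < b) {x : ℝ} (hx : 0 < x) :
    HasDerivAt (fun y => ∫ t in Ioi y, gigDensity p a b t) (-(gigDensity p a b x)) x := by
  have hT' : HasDerivAt (fun y => (∫ t in Ioi (0:ℝ), gigDensity p a b t)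
      - ∫ t in (0:ℝ)..y, gigDensity p a b t) (-(gigDensity p a b x)) x := by
    have := (hasDerivAt_primitive (continuousOn_gigDensity p a b)
      (integrableOn_gigDensity p ha hb) hx).const_sub
      (∫ t in Ioi (0:ℝ), gigDensity p a b t)
    simpa using this
  refine hT'.congr_of_eventuallyEq ?_
  filter_upwards [Ioi_mem_nhds hx] with y hy
  have := integral_split (integrableOn_gigDensity p ha hb) (show (0:ℝ) < y from hy)
  linarith

lemma F_mono (p : ℝ) {a b : ℝ} (ha : 0 < a) (hb : 0 < b) (hp : p ≤ -1) :
    MonotoneOn (fun x => (x^2 * gigDensity p a b x)⁻¹ * ∫ t in (0:ℝ)..x, gigDensity p a b t)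
      (Ioi 0) := by
  set u := fun x => x^2 * gigDensity p a b x with hu
  set N := fun x => ∫ t in (0:ℝ)..x, gigDensity p a b t with hN
  have hupos : ∀ x ∈ Ioi (0:ℝ), 0 < u x := by
    intro x hx
    have hx0 : (0:ℝ) < x := hx
    exact mul_pos (by positivity) (gigDensity_pos p ha hb hx0)
  have hF : ∀ x ∈ Ioi (0:ℝ), HasDerivAt (fun y => N y / u y)
      ((gigDensity p a b x * u x - N x * ((b/2 + (p+1)*x - a/2*x^2) * gigDensity p a b x))
        / (u x)^2) x := by
    intro x hx
    exact (hasDerivAt_primitive (continuousOn_gigDensity p a b)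
        (integrableOn_gigDensity p ha hb) hx).div
      (hasDerivAt_u p a b hx) (hupos x hx).ne'
  have heq : EqOn (fun x => (u x)⁻¹ * N x) (fun x => N x / u x) (Ioi 0) := by
    intro x hx; simp [div_eq_mul_inv]; ring
  apply MonotoneOn.congr _ heq.symm
  apply monotoneOn_of_deriv_nonneg (convex_Ioi 0)
  · exact fun x hx => (hF x hx).continuousAt.continuousWithinAt
  · rw [interior_Ioi]
    exact fun x hx => (hF x hx).differentiableAt.differentiableWithinAt
  · rw [interior_Ioi]
    intro x hx
    rw [(hF x hx).deriv]
    apply div_nonneg _ (by positivity)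
    have hkey := key_ineq_left p ha hb hp (show (0:ℝ) < x from hx)
    have hg := gigDensity_pos p ha hb (show (0:ℝ) < x from hx)
    have : N x * ((b/2 + (p+1)*x - a/2*x^2) * gigDensity p a b x)
        = gigDensity p a b x * ((b/2 + (p+1)*x - a/2*x^2) * N x) := by ring
    rw [this]
    have h2 : (b/2 + (p+1)*x - a/2*x^2) * N x ≤ u x := hkey
    nlinarith [hg, h2]

lemma H_anti (p : ℝ) {a b : ℝ} (ha : 0 < a) (hb : 0 < b) (hp : p ≤ -1) :
    AntitoneOn (fun x => (x^2 * gigDensity p a b x)⁻¹ * ∫ t in Ioi x, gigDensity p a b t)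
      (Ioi 0) := by
  set u := fun x => x^2 * gigDensity p a b x with hu
  set T := fun x => ∫ t in Ioi x, gigDensity p a b t with hT
  have hupos : ∀ x ∈ Ioi (0:ℝ), 0 < u x := by
    intro x hx
    have hx0 : (0:ℝ) < x := hx
    exact mul_pos (by positivity) (gigDensity_pos p ha hb hx0)
  have hF : ∀ x ∈ Ioi (0:ℝ), HasDerivAt (fun y => T y / u y)
      ((-(gigDensity p a b x) * u x - T x * ((b/2 + (p+1)*x - a/2*x^2) * gigDensity p a b x))
        / (u x)^2) x := by
    intro x hx
    exact (hasDerivAt_tail p ha hb hx).div (hasDerivAt_u p a b hx) (hupos x hx).ne'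
  have heq : EqOn (fun x => (u x)⁻¹ * T x) (fun x => T x / u x) (Ioi 0) := by
    intro x hx; simp [div_eq_mul_inv]; ring
  apply AntitoneOn.congr _ heq.symm
  apply antitoneOn_of_deriv_nonpos (convex_Ioi 0)
  · exact fun x hx => (hF x hx).continuousAt.continuousWithinAt
  · rw [interior_Ioi]
    exact fun x hx => (hF x hx).differentiableAt.differentiableWithinAt
  · rw [interior_Ioi]
    intro x hx
    rw [(hF x hx).deriv]
    apply div_nonpos_of_nonpos_of_nonneg _ (by positivity)
    have hkey := key_ineq_right p ha hb hp (show (0:ℝ) < x from hx)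
    have hg := gigDensity_pos p ha hb (show (0:ℝ) < x from hx)
    have h2 : -((b/2 + (p+1)*x - a/2*x^2) * T x) ≤ u x := hkey
    nlinarith [hg, h2]

lemma integrableOn_gw (p : ℝ) {a b : ℝ} (ha : 0 < a) (hb : 0 < b) {w : ℝ → ℝ}
    (hw_cont : ContinuousOn w (Ioi 0)) {B : ℝ} (hw_bdd : ∀ x ∈ Ioi (0:ℝ), |w x| ≤ B) :
    IntegrableOn (fun x => gigDensity p a b x * w x) (Ioi 0) := by
  have hmeas : AEStronglyMeasurable (fun x => gigDensity p a b x * w x)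
      (volume.restrict (Ioi (0:ℝ))) :=
    ((continuousOn_gigDensity p a b).mul hw_cont).aestronglyMeasurable measurableSet_Ioi
  refine Integrable.mono' ((integrableOn_gigDensity p ha hb).const_mul B) hmeas ?_
  filter_upwards [ae_restrict_mem measurableSet_Ioi] with x hx
  have hg := gigDensity_pos p ha hb (show (0:ℝ) < x from hx)
  rw [Real.norm_eq_abs, abs_mul, abs_of_pos hg]
  calc gigDensity p a b x * |w x| ≤ gigDensity p a b x * B :=
        mul_le_mul_of_nonneg_left (hw_bdd x hx) hg.le
    _ = B * gigDensity p a b x := mul_comm _ _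

lemma continuousOn_gw (p a b : ℝ) {w : ℝ → ℝ} (hw_cont : ContinuousOn w (Ioi 0)) :
    ContinuousOn (fun x => gigDensity p a b x * w x) (Ioi 0) :=
  (continuousOn_gigDensity p a b).mul hw_cont

lemma abs_setIntegral_gw_le (p : ℝ) {a b : ℝ} (ha : 0 < a) (hb : 0 < b) {w : ℝ → ℝ}
    (hw_cont : ContinuousOn w (Ioi 0)) {B : ℝ} (hw_bdd : ∀ x ∈ Ioi (0:ℝ), |w x| ≤ B)
    {s : Set ℝ} (hs : MeasurableSet s) (hsub : s ⊆ Ioi 0) :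
    |∫ t in s, gigDensity p a b t * w t| ≤ B * ∫ t in s, gigDensity p a b t := by
  have hgw := (integrableOn_gw p ha hb hw_cont hw_bdd).mono_set hsub
  have hg := (integrableOn_gigDensity p ha hb).mono_set hsub
  calc |∫ t in s, gigDensity p a b t * w t| ≤ ∫ t in s, |gigDensity p a b t * w t| := by
        simpa only [Real.norm_eq_abs] using
          MeasureTheory.norm_integral_le_integral_norm (μ := volume.restrict s)
            (fun t => gigDensity p a b t * w t)
    _ ≤ ∫ t in s, B * gigDensity p a b t := by
        apply setIntegral_mono_on hgw.abs (hg.const_mul B) hs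
        intro t ht
        have hgp := gigDensity_pos p ha hb (show (0:ℝ) < t from hsub ht)
        rw [abs_mul, abs_of_pos hgp]
        calc gigDensity p a b t * |w t| ≤ gigDensity p a b t * B :=
              mul_le_mul_of_nonneg_left (hw_bdd t (hsub ht)) hgp.le
          _ = B * gigDensity p a b t := mul_comm _ _
    _ = B * ∫ t in s, gigDensity p a b t := integral_const_mul B _

lemma master_bound (p : ℝ) {a b : ℝ} (ha : 0 < a) (hb : 0 < b) (hp : p ≤ -1)
    {w : ℝ → ℝ} (hw_cont : ContinuousOn w (Ioi 0)) {B : ℝ}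
    (hw_bdd : ∀ x ∈ Ioi (0:ℝ), |w x| ≤ B)
    (hw_zero : (∫ t in Ioi (0:ℝ), gigDensity p a b t * w t) = 0)
    {α : ℝ} (hα : 0 < α) {x : ℝ} (hx : 0 < x) :
    |(x^2 * gigDensity p a b x)⁻¹ * ∫ t in (0:ℝ)..x, gigDensity p a b t * w t|
      ≤ max ((α^2 * gigDensity p a b α)⁻¹ * ∫ t in (0:ℝ)..α, gigDensity p a b t)
          ((α^2 * gigDensity p a b α)⁻¹ * ∫ t in Ioi α, gigDensity p a b t) * B := by
  have hB : 0 ≤ B := le_trans (abs_nonneg _) (hw_bdd x hx)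
  have hupos : 0 < x^2 * gigDensity p a b x :=
    mul_pos (by positivity) (gigDensity_pos p ha hb hx)
  have huinv : 0 < (x^2 * gigDensity p a b x)⁻¹ := inv_pos.2 hupos
  rw [abs_mul, abs_of_pos huinv]
  rcases le_total x α with hxa | hax
  · -- use the left primitive
    have h1 : |∫ t in (0:ℝ)..x, gigDensity p a b t * w t|
        ≤ B * ∫ t in (0:ℝ)..x, gigDensity p a b t := by
      rw [intervalIntegral.integral_of_le hx.le, intervalIntegral.integral_of_le hx.le]
      exact abs_setIntegral_gw_le p ha hb hw_cont hw_bdd measurableSet_Ioc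
        Ioc_subset_Ioi_self
    calc (x^2 * gigDensity p a b x)⁻¹ * |∫ t in (0:ℝ)..x, gigDensity p a b t * w t|
        ≤ (x^2 * gigDensity p a b x)⁻¹ * (B * ∫ t in (0:ℝ)..x, gigDensity p a b t) :=
          mul_le_mul_of_nonneg_left h1 huinv.le
      _ = B * ((x^2 * gigDensity p a b x)⁻¹ * ∫ t in (0:ℝ)..x, gigDensity p a b t) := by
          ring
      _ ≤ B * ((α^2 * gigDensity p a b α)⁻¹ * ∫ t in (0:ℝ)..α, gigDensity p a b t) :=
          mul_le_mul_of_nonneg_left (F_mono p ha hb hp hx hα hxa) hB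
      _ ≤ B * max ((α^2 * gigDensity p a b α)⁻¹ * ∫ t in (0:ℝ)..α, gigDensity p a b t)
            ((α^2 * gigDensity p a b α)⁻¹ * ∫ t in Ioi α, gigDensity p a b t) :=
          mul_le_mul_of_nonneg_left (le_max_left _ _) hB
      _ = _ := mul_comm _ _
  · -- use the tail
    have hflip : (∫ t in (0:ℝ)..x, gigDensity p a b t * w t)
        = - ∫ t in Ioi x, gigDensity p a b t * w t := by
      have := integral_split (integrableOn_gw p ha hb hw_cont hw_bdd) hx
      rw [hw_zero] at this; linarith
    have h1 : |∫ t in Ioi x, gigDensity p a b t * w t|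
        ≤ B * ∫ t in Ioi x, gigDensity p a b t :=
      abs_setIntegral_gw_le p ha hb hw_cont hw_bdd measurableSet_Ioi (Ioi_subset_Ioi hx.le)
    calc (x^2 * gigDensity p a b x)⁻¹ * |∫ t in (0:ℝ)..x, gigDensity p a b t * w t|
        = (x^2 * gigDensity p a b x)⁻¹ * |∫ t in Ioi x, gigDensity p a b t * w t| := by
          rw [hflip, abs_neg]
      _ ≤ (x^2 * gigDensity p a b x)⁻¹ * (B * ∫ t in Ioi x, gigDensity p a b t) :=
          mul_le_mul_of_nonneg_left h1 huinv.le
      _ = B * ((x^2 * gigDensity p a b x)⁻¹ * ∫ t in Ioi x, gigDensity p a b t) := by ring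
      _ ≤ B * ((α^2 * gigDensity p a b α)⁻¹ * ∫ t in Ioi α, gigDensity p a b t) :=
          mul_le_mul_of_nonneg_left (H_anti p ha hb hp hα hx hax) hB
      _ ≤ B * max ((α^2 * gigDensity p a b α)⁻¹ * ∫ t in (0:ℝ)..α, gigDensity p a b t)
            ((α^2 * gigDensity p a b α)⁻¹ * ∫ t in Ioi α, gigDensity p a b t) :=
          mul_le_mul_of_nonneg_left (le_max_right _ _) hB
      _ = _ := mul_comm _ _

/-- for `p ≤ −1`, the function `f_h` is the unique bounded differentiable
solution of the GIG Stein equation on `(0,∞)` and satisfies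
`sup_{x>0} |f_h(x)| ≤ M · sup_{x>0} |h(x) − m_h|`, where
`α = (p + 1 + √((p+1)² + ab))/a` and
`M = max( (α² g(α))⁻¹ ∫₀^α g , (α² g(α))⁻¹ ∫_α^∞ g )`.
(The supremum bound is expressed via arbitrary upper bounds `B` of `|h − m_h|`.) -/
theorem gig_stein_solution_unique_bounded_and_bound (p a b : ℝ) (ha : 0 < a) (hb : 0 < b)
    (hp : p ≤ -1)
    (h : ℝ → ℝ) (hh_cont : ContinuousOn h (Set.Ioi 0))
    (hh_bdd : ∃ C, ∀ x ∈ Set.Ioi (0 : ℝ), |h x| ≤ C) :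
    let m := ∫ t in Set.Ioi (0 : ℝ), h t * gigDensity p a b t
    let fh : ℝ → ℝ := fun x =>
      (x ^ 2 * gigDensity p a b x)⁻¹ * ∫ t in (0 : ℝ)..x, gigDensity p a b t * (h t - m)
    let α := (p + 1 + Real.sqrt ((p + 1) ^ 2 + a * b)) / a
    let M := max ((α ^ 2 * gigDensity p a b α)⁻¹ * ∫ t in (0 : ℝ)..α, gigDensity p a b t)
                 ((α ^ 2 * gigDensity p a b α)⁻¹ * ∫ t in Set.Ioi α, gigDensity p a b t)
    -- `f_h` is a bounded differentiable solution of the GIG Stein equation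
    ((∀ x ∈ Set.Ioi (0 : ℝ), DifferentiableAt ℝ fh x ∧
        x ^ 2 * deriv fh x + (b / 2 + (p + 1) * x - a / 2 * x ^ 2) * fh x = h x - m) ∧
      (∃ C, ∀ x ∈ Set.Ioi (0 : ℝ), |fh x| ≤ C)) ∧
    -- uniqueness among bounded differentiable solutions
    (∀ f : ℝ → ℝ, (∀ x ∈ Set.Ioi (0 : ℝ), DifferentiableAt ℝ f x) →
      (∃ C, ∀ x ∈ Set.Ioi (0 : ℝ), |f x| ≤ C) →
      (∀ x ∈ Set.Ioi (0 : ℝ),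
        x ^ 2 * deriv f x + (b / 2 + (p + 1) * x - a / 2 * x ^ 2) * f x = h x - m) →
      ∀ x ∈ Set.Ioi (0 : ℝ), f x = fh x) ∧
    -- the uniform bound
    (∀ B : ℝ, (∀ x ∈ Set.Ioi (0 : ℝ), |h x - m| ≤ B) →
      ∀ x ∈ Set.Ioi (0 : ℝ), |fh x| ≤ M * B) := by
  intro m fh α M
  obtain ⟨C, hC⟩ := hh_bdd
  have hα : 0 < α := alpha_pos ha hb
  have hm : m = ∫ t in Ioi (0:ℝ), h t * gigDensity p a b t := rfl
  have habs2 : ∀ u v : ℝ, |u - v| ≤ |u| + |v| := by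
    intro u v
    rw [sub_eq_add_neg]
    exact (abs_add_le _ _).trans (le_of_eq (by rw [abs_neg]))
  have hw_cont : ContinuousOn (fun t => h t - m) (Ioi 0) := hh_cont.sub continuousOn_const
  have hw_bdd : ∀ x ∈ Ioi (0:ℝ), |h x - m| ≤ C + |m| := by
    intro x hx
    calc |h x - m| ≤ |h x| + |m| := habs2 _ _
      _ ≤ C + |m| := by linarith [hC x hx]
  have hw_zero : (∫ t in Ioi (0:ℝ), gigDensity p a b t * (h t - m)) = 0 := by
    have hgh_int : IntegrableOn (fun t => gigDensity p a b t * h t) (Ioi 0) :=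
      integrableOn_gw p ha hb hh_cont hC
    have hgm : IntegrableOn (fun t => gigDensity p a b t * m) (Ioi 0) :=
      (integrableOn_gigDensity p ha hb).mul_const m
    have hsplit : (∫ t in Ioi (0:ℝ), gigDensity p a b t * (h t - m))
        = (∫ t in Ioi (0:ℝ), gigDensity p a b t * h t)
          - ∫ t in Ioi (0:ℝ), gigDensity p a b t * m := by
      rw [← integral_sub hgh_int hgm]
      congr 1; ext t; ring
    have h1 : (∫ t in Ioi (0:ℝ), gigDensity p a b t * h t) = m := by
      rw [hm]; congr 1; ext t; ring
    have h2 : (∫ t in Ioi (0:ℝ), gigDensity p a b t * m) = m := by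
      rw [integral_mul_const, integral_gigDensity p ha hb, one_mul]
    rw [hsplit, h1, h2, sub_self]
  have hfh_eq : fh = fun y => (∫ t in (0:ℝ)..y, gigDensity p a b t * (h t - m))
      / (y^2 * gigDensity p a b y) := by
    funext y
    show (y^2 * gigDensity p a b y)⁻¹ * (∫ t in (0:ℝ)..y, gigDensity p a b t * (h t - m))
      = _
    rw [div_eq_mul_inv, mul_comm]
  have hsol : ∀ x ∈ Ioi (0:ℝ), DifferentiableAt ℝ fh x ∧
      x ^ 2 * deriv fh x + (b / 2 + (p + 1) * x - a / 2 * x ^ 2) * fh x = h x - m := by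
    intro x hx
    have hx0 : (0:ℝ) < x := hx
    have hgpos := gigDensity_pos p ha hb hx0
    have hune : x^2 * gigDensity p a b x ≠ 0 := (mul_pos (by positivity) hgpos).ne'
    have hu := hasDerivAt_u p a b hx0
    have hG := hasDerivAt_primitive (continuousOn_gw p a b hw_cont)
      (integrableOn_gw p ha hb hw_cont hw_bdd) hx0
    have hdiv := hG.div hu hune
    have hd : HasDerivAt fh ((gigDensity p a b x * (h x - m) * (x^2 * gigDensity p a b x)
        - (∫ t in (0:ℝ)..x, gigDensity p a b t * (h t - m))
          * ((b/2 + (p+1)*x - a/2*x^2) * gigDensity p a b x))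
        / (x^2 * gigDensity p a b x)^2) x := by
      rw [hfh_eq]; exact hdiv
    refine ⟨hd.differentiableAt, ?_⟩
    rw [hd.deriv]
    have hfhx : fh x = (x^2 * gigDensity p a b x)⁻¹
        * ∫ t in (0:ℝ)..x, gigDensity p a b t * (h t - m) := rfl
    rw [hfhx]
    set gx := gigDensity p a b x
    set Gx := ∫ t in (0:ℝ)..x, gigDensity p a b t * (h t - m)
    have hgne : gx ≠ 0 := hgpos.ne'
    field_simp
    ring
  have hbdd : ∀ x ∈ Ioi (0:ℝ), |fh x|
      ≤ max ((α^2 * gigDensity p a b α)⁻¹ * ∫ t in (0:ℝ)..α, gigDensity p a b t)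
          ((α^2 * gigDensity p a b α)⁻¹ * ∫ t in Ioi α, gigDensity p a b t) * (C + |m|) :=
    fun x hx => master_bound p ha hb hp hw_cont hw_bdd hw_zero hα hx
  refine ⟨⟨hsol, ⟨_, hbdd⟩⟩, ?_, ?_⟩
  · -- uniqueness
    intro f hf_diff hf_bdd hf_ode x hx
    obtain ⟨Cf, hCf⟩ := hf_bdd
    set K := max ((α^2 * gigDensity p a b α)⁻¹ * ∫ t in (0:ℝ)..α, gigDensity p a b t)
        ((α^2 * gigDensity p a b α)⁻¹ * ∫ t in Ioi α, gigDensity p a b t) * (C + |m|) with hK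
    have hW : ∀ y ∈ Ioi (0:ℝ), HasDerivAt
        (fun z => (z^2 * gigDensity p a b z) * (f z - fh z)) 0 y := by
      intro y hy
      have hy0 : (0:ℝ) < y := hy
      have hu := hasDerivAt_u p a b hy0
      have hfd : HasDerivAt f (deriv f y) y := (hf_diff y hy).hasDerivAt
      have hfhd : HasDerivAt fh (deriv fh y) y := ((hsol y hy).1).hasDerivAt
      have hmul := hu.mul (hfd.sub hfhd)
      refine hmul.congr_deriv ?_
      rw [Pi.sub_apply]
      have e1 := hf_ode y hy
      have e2 := (hsol y hy).2
      linear_combination (-gigDensity p a b y) * (e2 - e1)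
    have hconst := const_of_deriv_zero hW
    have hbd : ∀ y ∈ Ioi (0:ℝ),
        |(x^2 * gigDensity p a b x) * (f x - fh x)|
          ≤ (Cf + K) * (y^2 * gigDensity p a b y) := by
      intro y hy
      have hy0 : (0:ℝ) < y := hy
      have hupos : 0 < y^2 * gigDensity p a b y :=
        mul_pos (by positivity) (gigDensity_pos p ha hb hy0)
      have hxy : (x^2 * gigDensity p a b x) * (f x - fh x)
          = (y^2 * gigDensity p a b y) * (f y - fh y) := hconst x hx y hy
      rw [hxy, abs_mul, abs_of_pos hupos]
      have hfy : |f y - fh y| ≤ Cf + K := by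
        calc |f y - fh y| ≤ |f y| + |fh y| := habs2 _ _
          _ ≤ Cf + K := add_le_add (hCf y hy) (hbdd y hy)
      calc (y^2 * gigDensity p a b y) * |f y - fh y|
          ≤ (y^2 * gigDensity p a b y) * (Cf + K) :=
            mul_le_mul_of_nonneg_left hfy hupos.le
        _ = (Cf + K) * (y^2 * gigDensity p a b y) := mul_comm _ _
    have htend : Tendsto (fun y => (Cf + K) * (y^2 * gigDensity p a b y))
        (nhdsWithin 0 (Ioi 0)) (nhds 0) := by
      simpa using (tendsto_u_zero p ha hb).const_mul (Cf + K)
    have hle : |(x^2 * gigDensity p a b x) * (f x - fh x)| ≤ 0 := by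
      refine ge_of_tendsto htend ?_
      filter_upwards [self_mem_nhdsWithin] with y hy using hbd y hy
    have hc0 : (x^2 * gigDensity p a b x) * (f x - fh x) = 0 :=
      abs_eq_zero.mp (le_antisymm hle (abs_nonneg _))
    have hx0 : (0:ℝ) < x := hx
    have hune : x^2 * gigDensity p a b x ≠ 0 :=
      (mul_pos (pow_pos hx0 2) (gigDensity_pos p ha hb hx0)).ne'
    rcases mul_eq_zero.mp hc0 with h' | h'
    · exact absurd h' hune
    · exact sub_eq_zero.mp h'
  · intro B hB x hx
    exact master_bound p ha hb hp hw_cont hB hw_zero hα hx
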